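/- If a unit square (the laptop cross-section) is placed with its center at a corner of a quarter-plane (the table), then the area of the intersection of the square with the quarter-plane equals 1/4, for every orientation of the square. -/

import Mathlib

open Real MeasureTheory

/-- The rectangle of width 1 and length `L`, centered at `c` and rotated by `θ`
(width measured across the first rotated coordinate). -/
def rect (c : ℝ × ℝ) (θ L : ℝ) : Set (ℝ × ℝ) :=
  {p | |Real.cos θ * (p.1 - c.1) + Real.sin θ * (p.2 - c.2)| ≤ 1 / 2 ∧
       |(-Real.sin θ) * (p.1 - c.1) + Real.cos θ * (p.2 - c.2)| ≤ L / 2}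

/-- The quarter-plane modeling the table corner. -/
def Q : Set (ℝ × ℝ) := {p | p.1 ≤ 0 ∧ p.2 ≤ 0}

noncomputable def fLin (c s : ℝ) : (ℝ × ℝ) →ₗ[ℝ] (ℝ × ℝ) where
  toFun p := (c * p.1 + s * p.2, -s * p.1 + c * p.2)
  map_add' p q := by simp; constructor <;> ring
  map_smul' r p := by simp; constructor <;> ring

lemma rect_eq (θ : ℝ) : rect (0,0) θ 1 =
    (fLin (Real.cos θ) (Real.sin θ)) ⁻¹'
      (Set.Icc (-(1/2) : ℝ) (1/2) ×ˢ Set.Icc (-(1/2) : ℝ) (1/2)) := by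
  ext p
  simp [rect, fLin, abs_le, Set.mem_Icc]
  tauto

lemma vol_rect (θ : ℝ) : volume (rect (0,0) θ 1) = 1 := by
  have hdet : LinearMap.det (fLin (Real.cos θ) (Real.sin θ)) = 1 := by
    rw [← LinearMap.det_toMatrix (Module.Basis.finTwoProd ℝ), Matrix.det_fin_two]
    simp [LinearMap.toMatrix_apply, fLin]
    nlinarith [sin_sq_add_cos_sq θ]
  rw [rect_eq, Measure.addHaar_preimage_linearMap volume (by rw [hdet]; norm_num)]
  rw [hdet]
  rw [Measure.volume_eq_prod, Measure.prod_prod]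
  simp [Real.volume_Icc]
  norm_num

lemma meas_rect (θ : ℝ) : MeasurableSet (rect (0,0) θ 1) := by
  rw [rect_eq]
  exact (measurableSet_Icc.prod measurableSet_Icc).preimage (fLin _ _).continuous_of_finiteDimensional.measurable

/-- rotation by 90 degrees -/
lemma rot_mp : MeasurePreserving (fun p : ℝ × ℝ => (-p.2, p.1)) volume volume := by
  have h1 : MeasurePreserving (Prod.map (id : ℝ → ℝ) (Neg.neg : ℝ → ℝ)) volume volume := by
    rw [Measure.volume_eq_prod ℝ ℝ]
    exact (MeasurePreserving.id volume).prod (Measure.measurePreserving_neg volume)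
  have h2 : MeasurePreserving (Prod.swap : ℝ × ℝ → ℝ × ℝ) volume volume := by
    rw [Measure.volume_eq_prod ℝ ℝ]
    exact Measure.measurePreserving_swap
  have := h2.comp h1
  convert this using 1
  rfl

lemma rot_rect (θ : ℝ) :
    (fun p : ℝ × ℝ => (-p.2, p.1)) ⁻¹' (rect (0,0) θ 1) = rect (0,0) θ 1 := by
  ext p
  simp only [rect, Set.mem_preimage, Set.mem_setOf_eq, Prod.fst_zero, Prod.snd_zero, sub_zero]
  constructor
  · rintro ⟨h1, h2⟩
    refine ⟨?_, ?_⟩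
    · rw [show Real.cos θ * p.1 + Real.sin θ * p.2
          = -Real.sin θ * (-p.2) + Real.cos θ * p.1 by ring]
      exact h2
    · rw [show -Real.sin θ * p.1 + Real.cos θ * p.2
          = -(Real.cos θ * (-p.2) + Real.sin θ * p.1) by ring, abs_neg]
      exact h1
  · rintro ⟨h1, h2⟩
    refine ⟨?_, ?_⟩
    · rw [show Real.cos θ * (-p.2) + Real.sin θ * p.1
          = -(-Real.sin θ * p.1 + Real.cos θ * p.2) by ring, abs_neg]
      exact h2
    · rw [show -Real.sin θ * (-p.2) + Real.cos θ * p.1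
          = Real.cos θ * p.1 + Real.sin θ * p.2 by ring]
      exact h1

/-- A unit square centered at the corner of a quarter-plane has footprint of area exactly
`1/4`, for every orientation `θ`. -/
theorem unit_square_corner_footprint (θ : ℝ) :
    volume (rect (0, 0) θ 1 ∩ Q) = 1 / 4 := by
  set S := rect (0,0) θ 1 with hS
  set R : ℝ × ℝ → ℝ × ℝ := fun p => (-p.2, p.1) with hR
  have hSm : MeasurableSet S := meas_rect θ
  -- closed quadrants
  set Q1 : Set (ℝ × ℝ) := {p | p.1 ≤ 0 ∧ p.2 ≤ 0} with hQ1
  set Q2 : Set (ℝ × ℝ) := {p | p.1 ≤ 0 ∧ 0 ≤ p.2} with hQ2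
  set Q3 : Set (ℝ × ℝ) := {p | 0 ≤ p.1 ∧ 0 ≤ p.2} with hQ3
  set Q4 : Set (ℝ × ℝ) := {p | 0 ≤ p.1 ∧ p.2 ≤ 0} with hQ4
  have m1 : MeasurableSet Q1 :=
    (measurableSet_le measurable_fst measurable_const).inter
      (measurableSet_le measurable_snd measurable_const)
  have m2 : MeasurableSet Q2 :=
    (measurableSet_le measurable_fst measurable_const).inter
      (measurableSet_le measurable_const measurable_snd)
  have m3 : MeasurableSet Q3 :=
    (measurableSet_le measurable_const measurable_fst).inter
      (measurableSet_le measurable_const measurable_snd)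
  have m4 : MeasurableSet Q4 :=
    (measurableSet_le measurable_const measurable_fst).inter
      (measurableSet_le measurable_snd measurable_const)
  have hQeq : Q = Q1 := rfl
  -- rotation identities
  have pre1 : R ⁻¹' (S ∩ Q1) = S ∩ Q2 := by
    rw [Set.preimage_inter, rot_rect θ]
    congr 1
    ext p; simp [hR, hQ1, hQ2, neg_nonpos]
    tauto
  have pre2 : R ⁻¹' (S ∩ Q2) = S ∩ Q3 := by
    rw [Set.preimage_inter, rot_rect θ]
    congr 1
    ext p; simp [hR, hQ2, hQ3, neg_nonpos, neg_nonneg]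
    tauto
  have pre3 : R ⁻¹' (S ∩ Q3) = S ∩ Q4 := by
    rw [Set.preimage_inter, rot_rect θ]
    congr 1
    ext p; simp [hR, hQ3, hQ4, neg_nonneg]
    tauto
  have v1 : volume (S ∩ Q2) = volume (S ∩ Q1) := by
    rw [← pre1]; exact rot_mp.measure_preimage (hSm.inter m1).nullMeasurableSet
  have v2 : volume (S ∩ Q3) = volume (S ∩ Q2) := by
    rw [← pre2]; exact rot_mp.measure_preimage (hSm.inter m2).nullMeasurableSet
  have v3 : volume (S ∩ Q4) = volume (S ∩ Q3) := by
    rw [← pre3]; exact rot_mp.measure_preimage (hSm.inter m3).nullMeasurableSet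
  set v := volume (S ∩ Q1) with hv
  -- lower bound: the four closed quadrants cover S
  have cover : S ⊆ (S ∩ Q1) ∪ (S ∩ Q2) ∪ (S ∩ Q3) ∪ (S ∩ Q4) := by
    intro p hp
    rcases le_total p.1 0 with h1 | h1 <;> rcases le_total p.2 0 with h2 | h2 <;>
      simp [hQ1, hQ2, hQ3, hQ4, hp, h1, h2]
  have lower : 1 ≤ 4 * v := by
    calc (1 : ENNReal) = volume S := (vol_rect θ).symm
    _ ≤ volume ((S ∩ Q1) ∪ (S ∩ Q2) ∪ (S ∩ Q3) ∪ (S ∩ Q4)) := measure_mono cover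
    _ ≤ volume (S ∩ Q1) + volume (S ∩ Q2) + volume (S ∩ Q3) + volume (S ∩ Q4) := by
        refine le_trans (measure_union_le _ _) ?_
        refine add_le_add (le_trans (measure_union_le _ _) (add_le_add (measure_union_le _ _) le_rfl)) le_rfl
    _ = 4 * v := by rw [v3, v2, v1]; ring
  -- null axes
  have axes : volume ({p : ℝ × ℝ | p.1 = 0} ∪ {p : ℝ × ℝ | p.2 = 0}) = 0 := by
    refine le_antisymm (le_trans (measure_union_le _ _) ?_) zero_le
    have h1 : volume {p : ℝ × ℝ | p.1 = 0} = 0 := by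
      have : {p : ℝ × ℝ | p.1 = 0} = ({0} : Set ℝ) ×ˢ (Set.univ : Set ℝ) := by
        ext ⟨x, y⟩; simp [eq_comm]
      rw [this, Measure.volume_eq_prod, Measure.prod_prod]
      simp
    have h2 : volume {p : ℝ × ℝ | p.2 = 0} = 0 := by
      have : {p : ℝ × ℝ | p.2 = 0} = (Set.univ : Set ℝ) ×ˢ ({0} : Set ℝ) := by
        ext ⟨x, y⟩; simp [eq_comm]
      rw [this, Measure.volume_eq_prod, Measure.prod_prod]
      simp
    rw [h1, h2]; simp
  -- open quadrants
  set O1 : Set (ℝ × ℝ) := {p | p.1 < 0 ∧ p.2 < 0} with hO1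
  set O2 : Set (ℝ × ℝ) := {p | p.1 < 0 ∧ 0 < p.2} with hO2
  set O3 : Set (ℝ × ℝ) := {p | 0 < p.1 ∧ 0 < p.2} with hO3
  set O4 : Set (ℝ × ℝ) := {p | 0 < p.1 ∧ p.2 < 0} with hO4
  have n1 : MeasurableSet O1 :=
    (measurableSet_lt measurable_fst measurable_const).inter
      (measurableSet_lt measurable_snd measurable_const)
  have n2 : MeasurableSet O2 :=
    (measurableSet_lt measurable_fst measurable_const).inter
      (measurableSet_lt measurable_const measurable_snd)
  have n3 : MeasurableSet O3 :=
    (measurableSet_lt measurable_const measurable_fst).inter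
      (measurableSet_lt measurable_const measurable_snd)
  have n4 : MeasurableSet O4 :=
    (measurableSet_lt measurable_const measurable_fst).inter
      (measurableSet_lt measurable_snd measurable_const)
  have sub : ∀ (Qi Oi : Set (ℝ × ℝ)),
      (∀ p : ℝ × ℝ, p ∈ Qi → p.1 ≠ 0 → p.2 ≠ 0 → p ∈ Oi) →
      volume (S ∩ Qi) ≤ volume (S ∩ Oi) := by
    intro Qi Oi hQO
    calc volume (S ∩ Qi) ≤ volume ((S ∩ Oi) ∪ ({p : ℝ × ℝ | p.1 = 0} ∪ {p : ℝ × ℝ | p.2 = 0})) := by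
          apply measure_mono
          intro p hp
          by_cases h1 : p.1 = 0
          · right; left; exact h1
          · by_cases h2 : p.2 = 0
            · right; right; exact h2
            · left; exact ⟨hp.1, hQO p hp.2 h1 h2⟩
    _ ≤ volume (S ∩ Oi) + volume ({p : ℝ × ℝ | p.1 = 0} ∪ {p : ℝ × ℝ | p.2 = 0}) := measure_union_le _ _
    _ = volume (S ∩ Oi) := by rw [axes, add_zero]
  have u1 : volume (S ∩ Q1) ≤ volume (S ∩ O1) := by
    apply sub; intro p hp h1 h2; exact ⟨lt_of_le_of_ne hp.1 h1, lt_of_le_of_ne hp.2 h2⟩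
  have u2 : volume (S ∩ Q2) ≤ volume (S ∩ O2) := by
    apply sub; intro p hp h1 h2; exact ⟨lt_of_le_of_ne hp.1 h1, lt_of_le_of_ne hp.2 (Ne.symm h2)⟩
  have u3 : volume (S ∩ Q3) ≤ volume (S ∩ O3) := by
    apply sub; intro p hp h1 h2
    exact ⟨lt_of_le_of_ne hp.1 (Ne.symm h1), lt_of_le_of_ne hp.2 (Ne.symm h2)⟩
  have u4 : volume (S ∩ Q4) ≤ volume (S ∩ O4) := by
    apply sub; intro p hp h1 h2; exact ⟨lt_of_le_of_ne hp.1 (Ne.symm h1), lt_of_le_of_ne hp.2 h2⟩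
  -- disjoint union of open pieces inside S
  have upper : 4 * v ≤ 1 := by
    have d12 : Disjoint (S ∩ O1) (S ∩ O2) := by
      rw [Set.disjoint_left]; rintro p ⟨_, _, h⟩ ⟨_, _, h'⟩; exact absurd (h.trans h') (lt_irrefl _)
    have d34 : Disjoint (S ∩ O3) (S ∩ O4) := by
      rw [Set.disjoint_left]; rintro p ⟨_, _, h⟩ ⟨_, _, h'⟩; exact absurd (h'.trans h) (lt_irrefl _)
    have d12_34 : Disjoint ((S ∩ O1) ∪ (S ∩ O2)) ((S ∩ O3) ∪ (S ∩ O4)) := by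
      rw [Set.disjoint_left]
      rintro p (⟨_, h, _⟩ | ⟨_, h, _⟩) (⟨_, h', _⟩ | ⟨_, h', _⟩) <;>
        exact absurd (h.trans h') (lt_irrefl _)
    have e1 : volume ((S ∩ O1) ∪ (S ∩ O2)) = volume (S ∩ O1) + volume (S ∩ O2) :=
      measure_union d12 (hSm.inter n2)
    have e2 : volume ((S ∩ O3) ∪ (S ∩ O4)) = volume (S ∩ O3) + volume (S ∩ O4) :=
      measure_union d34 (hSm.inter n4)
    have e : volume ((S ∩ O1) ∪ (S ∩ O2) ∪ ((S ∩ O3) ∪ (S ∩ O4)))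
        = volume (S ∩ O1) + volume (S ∩ O2) + (volume (S ∩ O3) + volume (S ∩ O4)) := by
      rw [measure_union d12_34 ((hSm.inter n3).union (hSm.inter n4)), e1, e2]
    calc 4 * v = volume (S ∩ Q1) + volume (S ∩ Q2) + (volume (S ∩ Q3) + volume (S ∩ Q4)) := by
          rw [v3, v2, v1]; ring
    _ ≤ volume (S ∩ O1) + volume (S ∩ O2) + (volume (S ∩ O3) + volume (S ∩ O4)) := by
          exact add_le_add (add_le_add u1 u2) (add_le_add u3 u4)
    _ = volume ((S ∩ O1) ∪ (S ∩ O2) ∪ ((S ∩ O3) ∪ (S ∩ O4))) := e.symm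
    _ ≤ volume S := by
          apply measure_mono
          rintro p (⟨⟨h, _⟩ | ⟨h, _⟩⟩ | ⟨⟨h, _⟩ | ⟨h, _⟩⟩) <;> exact h
    _ = 1 := vol_rect θ
  have hveq : 4 * v = 1 := le_antisymm upper lower
  rw [hQeq, ← hv]
  exact (ENNReal.eq_div_iff (by norm_num) (by norm_num)).mpr hveq
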